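/- Let 0 < r_1 < r_2 < r_3 with r_2(r_3−r_1)³ − r_1(r_3+r_2)³ − r_3(r_1+r_2)³ > 0. Then the point (π, 0) is a strict local minimum of f(α,β) = F_{12}(α) + F_{13}(β) + F_{23}(α−β), where F_{ij}(θ) = (r_i² + r_j² − 2 r_i r_j cos θ)^{−1/2}. -/

import Mathlib

set_option maxHeartbeats 1000000

lemma key_ineq (a b : ℝ) (ha : 0 < a) (hb : 0 < b) :
    (b^2 - a^2)/(2*b^3) ≤ 1/a - 1/b := by
  have h1 : 1/a - 1/b = (b-a)/(a*b) := by field_simp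
  rw [h1, div_le_div_iff₀ (by positivity) (by positivity)]
  nlinarith [mul_nonneg (mul_nonneg hb.le (sq_nonneg (b - a))) (show (0:ℝ) ≤ 2*b + a by linarith)]

lemma term_lb (c s : ℝ) (hc : 0 < c) (hs : 0 < s) :
    1/Real.sqrt s + (s - c)/(2*s*Real.sqrt s) ≤ 1/Real.sqrt c := by
  have ha : 0 < Real.sqrt c := Real.sqrt_pos.2 hc
  have hb : 0 < Real.sqrt s := Real.sqrt_pos.2 hs
  have hc2 : Real.sqrt c ^ 2 = c := Real.sq_sqrt hc.le
  have hs2 : Real.sqrt s ^ 2 = s := Real.sq_sqrt hs.le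
  have hk := key_ineq (Real.sqrt c) (Real.sqrt s) ha hb
  have hcube : Real.sqrt s ^ 3 = s * Real.sqrt s := by
    rw [pow_succ, hs2]
  have h3 : (Real.sqrt s ^2 - Real.sqrt c^2)/(2*Real.sqrt s^3)
      = (s - c)/(2*s*Real.sqrt s) := by
    rw [hc2, hs2, hcube]; ring_nf
  rw [h3] at hk; linarith

lemma one_sub_cos_le (t : ℝ) : 1 - Real.cos t ≤ t^2/2 := by
  have := Real.one_sub_sq_div_two_le_cos (x := t); linarith

lemma sin_sq_bound (u : ℝ) (hu : 0 ≤ u) (hu1 : u ≤ 1) : u^2 - u^4/2 ≤ Real.sin u ^ 2 := by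
  rcases eq_or_lt_of_le hu with h | h
  · simp [← h]
  · have h2 : u - u^3/4 < Real.sin u := by
      have := Real.sin_gt_sub_cube h; linarith [pow_pos h 3]
    have h3 : 0 ≤ u - u^3/4 := by
      nlinarith [mul_nonneg (mul_nonneg hu (by linarith : (0:ℝ) ≤ 1 - u)) (by linarith : (0:ℝ) ≤ 1 + u)]
    have h4 : (u - u^3/4)^2 ≤ Real.sin u ^ 2 := by nlinarith
    have h5 : u^2 - u^4/2 ≤ (u - u^3/4)^2 := by nlinarith [sq_nonneg (u^3)]
    linarith

lemma cos_le_bound (t : ℝ) (ht : |t| ≤ 2) : Real.cos t ≤ 1 - t^2/2 + t^4/16 := by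
  have key : ∀ s : ℝ, 0 ≤ s → s ≤ 2 → Real.cos s ≤ 1 - s^2/2 + s^4/16 := by
    intro s hs hs2
    have hcos : Real.cos s = 1 - 2 * Real.sin (s/2) ^ 2 := by
      rw [show s = 2*(s/2) by ring, Real.cos_two_mul, Real.cos_sq']; ring
    have hb := sin_sq_bound (s/2) (by linarith) (by linarith)
    nlinarith
  have h0 := key |t| (abs_nonneg t) ht
  rw [← Real.cos_abs t]
  have h1 : |t|^2 = t^2 := sq_abs t
  have h2 : |t|^4 = t^4 := by rw [show (4:ℕ) = 2*2 from rfl, pow_mul, pow_mul, h1]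
  rw [h1, h2] at h0; exact h0

lemma final_pos (P E D x y e2 : ℝ) (hP : 0 < P) (hE : 0 < E) (hD : 0 < D)
    (hdel : 0 < P*E - D*(P+E)) (hde : e2 * (P*E) ≤ P*E - D*(P+E)) (he1 : e2 ≤ 1)
    (hx : x^2 ≤ e2) (hy : y^2 ≤ e2) (hpos : 0 < x^2 + y^2) :
    0 < P*(x^2/2 - x^4/16) + E*((x-y)^2/2 - (x-y)^4/16) - D*(y^2/2) := by
  have he0 : 0 ≤ e2 := le_trans (sq_nonneg x) hx
  have hx4 : x^4 ≤ e2 * x^2 := by nlinarith [sq_nonneg x]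
  have hxy2 : (x-y)^2 ≤ 4*e2 := by nlinarith
  have hxy4 : (x-y)^4 ≤ 4*e2*(x-y)^2 := by nlinarith [sq_nonneg (x-y)]
  have f1 : P*x^4 ≤ P*(e2*x^2) := mul_le_mul_of_nonneg_left hx4 hP.le
  have f2 : (0:ℝ) ≤ P*(e2*x^2) := by positivity
  have f3 : E*(x-y)^4 ≤ E*(4*e2*(x-y)^2) := mul_le_mul_of_nonneg_left hxy4 hE.le
  have h5 : (1/2 - e2/4)*(P*x^2 + E*(x-y)^2) - D*(y^2/2)
      ≤ P*(x^2/2 - x^4/16) + E*((x-y)^2/2 - (x-y)^4/16) - D*(y^2/2) := by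
    nlinarith [f1, f2, f3]
  have hPE : 0 < P + E := by linarith
  have hW : 0 < (P+E) * ((1/2 - e2/4)*(P*x^2 + E*(x-y)^2) - D*(y^2/2)) := by
    have hid : (P+E) * ((1/2 - e2/4)*(P*x^2 + E*(x-y)^2) - D*(y^2/2))
        = (1/2 - e2/4)*(((P+E)*x - E*y)^2 + P*E*y^2) - (P+E)*D*(y^2/2) := by ring
    rw [hid]
    rcases eq_or_ne y 0 with hy0 | hy0
    · have hx0 : x ≠ 0 := by
        intro hx0; rw [hx0, hy0] at hpos; norm_num at hpos
      have hx2 : 0 < x^2 := by positivity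
      rw [hy0]
      have hz2 : ((P+E)*x - E*0)^2 = (P+E)^2 * x^2 := by ring
      rw [hz2]
      nlinarith [mul_pos (mul_pos hPE hPE) hx2]
    · have hy2 : 0 < y^2 := by positivity
      nlinarith [sq_nonneg ((P+E)*x - E*y), mul_le_mul_of_nonneg_right hde (sq_nonneg y),
        mul_pos hdel hy2, mul_nonneg he0 (sq_nonneg ((P+E)*x - E*y))]
  have hW2 : 0 < (1/2 - e2/4)*(P*x^2 + E*(x-y)^2) - D*(y^2/2) := by
    nlinarith [hW]
  linarith

theorem stmt_9 (r1 r2 r3 : ℝ) (h1 : 0 < r1) (h12 : r1 < r2) (h23 : r2 < r3)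
    (h : r2 * (r3 - r1)^3 - r1 * (r3 + r2)^3 - r3 * (r1 + r2)^3 > 0) :
    let F : ℝ → ℝ → ℝ → ℝ := fun ri rj θ =>
      1 / Real.sqrt (ri^2 + rj^2 - 2 * ri * rj * Real.cos θ)
    let f : ℝ × ℝ → ℝ := fun p => F r1 r2 p.1 + F r1 r3 p.2 + F r2 r3 (p.1 - p.2)
    ∃ ε > 0, ∀ p : ℝ × ℝ, p ≠ (Real.pi, 0) → ‖p - (Real.pi, 0)‖ < ε →
      f (Real.pi, 0) < f p := by
  intro F f
  have h2 : 0 < r2 := h1.trans h12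
  have h3 : 0 < r3 := h2.trans h23
  have h13 : r1 < r3 := h12.trans h23
  set P : ℝ := r1*r2/(r1+r2)^3 with hPdef
  set E : ℝ := r2*r3/(r2+r3)^3 with hEdef
  set D : ℝ := r1*r3/(r3-r1)^3 with hDdef
  have hP : 0 < P := by rw [hPdef]; positivity
  have hE : 0 < E := by rw [hEdef]; positivity
  have hr31 : 0 < r3 - r1 := by linarith
  have hD : 0 < D := by rw [hDdef]; positivity
  have hdel : 0 < P*E - D*(P+E) := by
    have heq : P*E - D*(P+E) =
        (r1*r2*r3*(r2 * (r3 - r1)^3 - r1 * (r3 + r2)^3 - r3 * (r1 + r2)^3))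
        / ((r1+r2)^3 * (r2+r3)^3 * (r3-r1)^3) := by
      rw [hPdef, hEdef, hDdef]; field_simp; ring
    rw [heq]; positivity
  -- choose ε
  set e2 : ℝ := min 1 ((P*E - D*(P+E))/(P*E)) with he2def
  have he2pos : 0 < e2 := lt_min one_pos (by positivity)
  have he1 : e2 ≤ 1 := min_le_left _ _
  have hde : e2 * (P*E) ≤ P*E - D*(P+E) := by
    have := min_le_right 1 ((P*E - D*(P+E))/(P*E))
    calc e2 * (P*E) ≤ ((P*E - D*(P+E))/(P*E)) * (P*E) :=
          mul_le_mul_of_nonneg_right this (by positivity)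
      _ = P*E - D*(P+E) := by field_simp
  refine ⟨Real.sqrt e2, Real.sqrt_pos.2 he2pos, ?_⟩
  intro p hne hnorm
  set x : ℝ := p.1 - Real.pi with hxdef
  set y : ℝ := p.2 with hydef
  -- extract coordinate bounds
  have hx1 : |x| < Real.sqrt e2 := by
    have := (norm_fst_le (p - (Real.pi, 0))).trans_lt hnorm
    simpa [Real.norm_eq_abs, hxdef] using this
  have hy1 : |y| < Real.sqrt e2 := by
    have := (norm_snd_le (p - (Real.pi, 0))).trans_lt hnorm
    simpa [Real.norm_eq_abs, hydef] using this
  have hse : Real.sqrt e2 ≤ 1 := by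
    rw [show (1:ℝ) = Real.sqrt 1 by simp]
    exact Real.sqrt_le_sqrt he1
  have hx2 : x^2 ≤ e2 := by
    have : |x|^2 < Real.sqrt e2 ^ 2 := by
      apply pow_lt_pow_left₀ hx1 (abs_nonneg x) (by norm_num)
    rw [sq_abs, Real.sq_sqrt he2pos.le] at this; linarith
  have hy2 : y^2 ≤ e2 := by
    have : |y|^2 < Real.sqrt e2 ^ 2 := by
      apply pow_lt_pow_left₀ hy1 (abs_nonneg y) (by norm_num)
    rw [sq_abs, Real.sq_sqrt he2pos.le] at this; linarith
  have hxa : |x| ≤ 2 := by linarith [hx1.le.trans hse]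
  have hya : |y| ≤ 2 := by linarith [hy1.le.trans hse]
  have hxya : |x - y| ≤ 2 := by
    calc |x - y| ≤ |x| + |y| := abs_sub _ _
      _ ≤ 2 := by
        have := hx1.le.trans hse; have := hy1.le.trans hse; linarith
  have hpos : 0 < x^2 + y^2 := by
    have : x ≠ 0 ∨ y ≠ 0 := by
      by_contra hc
      push_neg at hc
      apply hne
      have hp1 : p.1 = Real.pi := by have := hc.1; rw [hxdef] at this; linarith [sub_eq_zero.1 this]
      have hp2 : p.2 = 0 := hc.2
      exact Prod.ext hp1 hp2
    rcases this with hx0 | hy0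
    · have : 0 < x^2 := by positivity
      nlinarith [sq_nonneg y]
    · have : 0 < y^2 := by positivity
      nlinarith [sq_nonneg x]
  -- values at the critical point
  have hcospi : Real.cos Real.pi = -1 := Real.cos_pi
  have hF12pi : F r1 r2 Real.pi = 1/(r1+r2) := by
    simp only [F, hcospi]
    rw [show r1^2 + r2^2 - 2*r1*r2*(-1) = (r1+r2)^2 by ring, Real.sqrt_sq (by linarith)]
  have hF13z : F r1 r3 0 = 1/(r3-r1) := by
    simp only [F, Real.cos_zero]
    rw [show r1^2 + r3^2 - 2*r1*r3*1 = (r3-r1)^2 by ring, Real.sqrt_sq (by linarith)]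
  have hF23pi : F r2 r3 (Real.pi - 0) = 1/(r2+r3) := by
    simp only [F, sub_zero, hcospi]
    rw [show r2^2 + r3^2 - 2*r2*r3*(-1) = (r2+r3)^2 by ring, Real.sqrt_sq (by linarith)]
  -- lower bounds on each term of f p
  have hb12 : 1/(r1+r2) + P * (1 + Real.cos p.1) ≤ F r1 r2 p.1 := by
    have hc : 0 < r1^2 + r2^2 - 2*r1*r2*Real.cos p.1 := by
      nlinarith [mul_nonneg (mul_pos h1 h2).le (sub_nonneg.2 (Real.cos_le_one p.1)),
        mul_pos (sub_pos.2 h12) (sub_pos.2 h12)]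
    have hs : (0:ℝ) < (r1+r2)^2 := by positivity
    have := term_lb (r1^2 + r2^2 - 2*r1*r2*Real.cos p.1) ((r1+r2)^2) hc hs
    rw [Real.sqrt_sq (by linarith : (0:ℝ) ≤ r1+r2)] at this
    have he : ((r1+r2)^2 - (r1^2 + r2^2 - 2*r1*r2*Real.cos p.1))/(2*(r1+r2)^2*(r1+r2))
        = P * (1 + Real.cos p.1) := by
      rw [hPdef]; field_simp; ring
    rw [he] at this
    simpa [F] using this
  have hb23 : 1/(r2+r3) + E * (1 + Real.cos (p.1 - p.2)) ≤ F r2 r3 (p.1 - p.2) := by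
    have hc : 0 < r2^2 + r3^2 - 2*r2*r3*Real.cos (p.1-p.2) := by
      nlinarith [mul_nonneg (mul_pos h2 h3).le (sub_nonneg.2 (Real.cos_le_one (p.1-p.2))),
        mul_pos (sub_pos.2 h23) (sub_pos.2 h23)]
    have hs : (0:ℝ) < (r2+r3)^2 := by positivity
    have := term_lb (r2^2 + r3^2 - 2*r2*r3*Real.cos (p.1-p.2)) ((r2+r3)^2) hc hs
    rw [Real.sqrt_sq (by linarith : (0:ℝ) ≤ r2+r3)] at this
    have he : ((r2+r3)^2 - (r2^2 + r3^2 - 2*r2*r3*Real.cos (p.1-p.2)))/(2*(r2+r3)^2*(r2+r3))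
        = E * (1 + Real.cos (p.1-p.2)) := by
      rw [hEdef]; field_simp; ring
    rw [he] at this
    simpa [F] using this
  have hb13 : 1/(r3-r1) - D * (1 - Real.cos p.2) ≤ F r1 r3 p.2 := by
    have hc : 0 < r1^2 + r3^2 - 2*r1*r3*Real.cos p.2 := by
      nlinarith [mul_nonneg (mul_pos h1 h3).le (sub_nonneg.2 (Real.cos_le_one p.2)),
        mul_pos (sub_pos.2 h13) (sub_pos.2 h13)]
    have hs : (0:ℝ) < (r3-r1)^2 := by positivity
    have := term_lb (r1^2 + r3^2 - 2*r1*r3*Real.cos p.2) ((r3-r1)^2) hc hs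
    rw [Real.sqrt_sq (by linarith : (0:ℝ) ≤ r3-r1)] at this
    have he : ((r3-r1)^2 - (r1^2 + r3^2 - 2*r1*r3*Real.cos p.2))/(2*(r3-r1)^2*(r3-r1))
        = -(D * (1 - Real.cos p.2)) := by
      rw [hDdef]; field_simp; ring
    rw [he] at this
    simpa [F, sub_eq_add_neg] using this
  -- translate the cosines
  have hc1 : Real.cos p.1 = - Real.cos x := by
    rw [show p.1 = x + Real.pi by rw [hxdef]; ring, Real.cos_add_pi]
  have hc2' : Real.cos (p.1 - p.2) = - Real.cos (x - y) := by
    rw [show p.1 - p.2 = (x - y) + Real.pi by rw [hxdef, hydef]; ring, Real.cos_add_pi]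
  have hcy : Real.cos p.2 = Real.cos y := by rw [hydef]
  -- cosine estimates
  have hcx : x^2/2 - x^4/16 ≤ 1 - Real.cos x := by
    have := cos_le_bound x hxa; linarith
  have hcxy : (x-y)^2/2 - (x-y)^4/16 ≤ 1 - Real.cos (x-y) := by
    have := cos_le_bound (x-y) hxya; linarith
  have hcy2 : 1 - Real.cos y ≤ y^2/2 := one_sub_cos_le y
  -- final combination
  have hfin := final_pos P E D x y e2 hP hE hD hdel hde he1 hx2 hy2 hpos
  have hq : 0 < P*(1 + Real.cos p.1) + E*(1 + Real.cos (p.1-p.2)) - D*(1 - Real.cos p.2) := by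
    rw [hc1, hc2', hcy]
    have t1 : P*(x^2/2 - x^4/16) ≤ P*(1 - Real.cos x) := mul_le_mul_of_nonneg_left hcx hP.le
    have t2 : E*((x-y)^2/2 - (x-y)^4/16) ≤ E*(1 - Real.cos (x-y)) :=
      mul_le_mul_of_nonneg_left hcxy hE.le
    have t3 : D*(1 - Real.cos y) ≤ D*(y^2/2) := mul_le_mul_of_nonneg_left hcy2 hD.le
    linarith [t1, t2, t3, hfin]
  have hfval : f (Real.pi, 0) = 1/(r1+r2) + 1/(r3-r1) + 1/(r2+r3) := by
    simp only [f]
    rw [hF12pi, hF13z, hF23pi]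
  have hfp : f p = F r1 r2 p.1 + F r1 r3 p.2 + F r2 r3 (p.1 - p.2) := rfl
  rw [hfval, hfp]
  linarith [hb12, hb23, hb13, hq]
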